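/- Suppose y2 − y1 ≤ √2·L. Then f is monotone nondecreasing on the interval [y1, x*] and monotone nonincreasing on the interval [x*, y2], where x* = (y1 + y2)/2. -/

import Mathlib

open Real Set

private lemma log_lower_aux (r : ℝ) (hr : 1 ≤ r) : 2 * (r - 1) / (r + 1) ≤ Real.log r := by
  have key : MonotoneOn (fun r : ℝ => Real.log r - 2 * (r - 1) / (r + 1)) (Set.Ici 1) := by
    have hderiv : ∀ x : ℝ, 0 < x →
        HasDerivAt (fun r : ℝ => Real.log r - 2 * (r - 1) / (r + 1))
          (x⁻¹ - (2 * 1 * (x + 1) - 2 * (x - 1) * 1) / (x + 1) ^ 2) x := by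
      intro x hx
      exact (Real.hasDerivAt_log hx.ne').sub
        ((((hasDerivAt_id x).sub_const 1).const_mul 2).div
          ((hasDerivAt_id x).add_const 1) (by positivity))
    apply monotoneOn_of_deriv_nonneg (convex_Ici 1)
    · apply ContinuousOn.sub
      · apply Real.continuousOn_log.mono
        intro x hx
        have hx1 : (1:ℝ) ≤ x := hx
        simp only [Set.mem_compl_iff, Set.mem_singleton_iff]
        intro h
        rw [h] at hx1
        linarith
      · apply ContinuousOn.div (by fun_prop) (by fun_prop)
        intro x hx
        have hx1 : (1:ℝ) ≤ x := hx
        positivity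
    · intro x hx
      rw [interior_Ici] at hx
      have hx1 : (1:ℝ) < x := hx
      exact (hderiv x (by linarith)).differentiableAt.differentiableWithinAt
    · intro x hx
      rw [interior_Ici] at hx
      have hx1 : (1:ℝ) < x := hx
      have hx0 : (0:ℝ) < x := by linarith
      rw [(hderiv x hx0).deriv]
      have h1 : (2 * 1 * (x + 1) - 2 * (x - 1) * 1) / (x + 1) ^ 2 = 4 / (x + 1) ^ 2 := by
        ring_nf
      rw [h1, sub_nonneg, div_le_iff₀ (by positivity)]
      rw [inv_eq_one_div]
      rw [div_mul_eq_mul_div, le_div_iff₀ hx0]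
      nlinarith
  have h := key (Set.self_mem_Ici) (Set.mem_Ici.2 hr) hr
  simp only [Real.log_one] at h
  norm_num at h
  linarith [h]

private lemma key_ineq (L a b : ℝ) (hL : 0 < L) (ha : 0 ≤ a) (hab : a ≤ b)
    (hs : a + b ≤ Real.sqrt 2 * L) :
    a * Real.exp (-a ^ 2 / L ^ 2) ≤ b * Real.exp (-b ^ 2 / L ^ 2) := by
  rcases eq_or_lt_of_le ha with h | h
  · have hb : 0 ≤ b := le_trans ha hab
    rw [← h, zero_mul]
    positivity
  · have hb : 0 < b := lt_of_lt_of_le h hab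
    have hr : 1 ≤ b / a := (one_le_div h).2 hab
    have hlog := log_lower_aux (b / a) hr
    rw [Real.log_div hb.ne' h.ne'] at hlog
    have h2 : 2 * (b / a - 1) / (b / a + 1) = 2 * (b - a) / (a + b) := by
      field_simp
      ring
    rw [h2] at hlog
    have hsq : (a + b) ^ 2 ≤ 2 * L ^ 2 := by
      have h2L : (Real.sqrt 2 * L) ^ 2 = 2 * L ^ 2 := by
        rw [mul_pow, Real.sq_sqrt (by norm_num : (0:ℝ) ≤ 2)]
      nlinarith [add_pos h hb, Real.sqrt_nonneg 2]
    have hchain : (b ^ 2 - a ^ 2) / L ^ 2 ≤ 2 * (b - a) / (a + b) := by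
      rw [div_le_div_iff₀ (by positivity) (by positivity : (0:ℝ) < a + b)]
      nlinarith [mul_le_mul_of_nonneg_left hsq (sub_nonneg.2 hab)]
    rw [sub_div] at hchain
    have hfin : Real.log a - a ^ 2 / L ^ 2 ≤ Real.log b - b ^ 2 / L ^ 2 := by linarith
    calc a * Real.exp (-a ^ 2 / L ^ 2)
        = Real.exp (Real.log a - a ^ 2 / L ^ 2) := by
          rw [sub_eq_add_neg, Real.exp_add, Real.exp_log h, neg_div]
      _ ≤ Real.exp (Real.log b - b ^ 2 / L ^ 2) := Real.exp_le_exp.2 hfin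
      _ = b * Real.exp (-b ^ 2 / L ^ 2) := by
          rw [sub_eq_add_neg, Real.exp_add, Real.exp_log hb, neg_div]

private lemma hasDerivAt_F (y1 y2 L C : ℝ) (hL : 0 < L) (x : ℝ) :
    HasDerivAt (fun x => C * (Real.exp (-(x - y1) ^ 2 / L ^ 2) + Real.exp (-(x - y2) ^ 2 / L ^ 2)))
      (C * (2 / L ^ 2) *
        ((y2 - x) * Real.exp (-(y2 - x) ^ 2 / L ^ 2) - (x - y1) * Real.exp (-(x - y1) ^ 2 / L ^ 2)))
      x := by
  have h1 : HasDerivAt (fun x : ℝ => -(x - y1) ^ 2 / L ^ 2)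
      (-(2 * (x - y1) ^ 1 * 1) / L ^ 2) x :=
    (((hasDerivAt_id x).sub_const y1).pow 2).neg.div_const (L ^ 2)
  have h2 : HasDerivAt (fun x : ℝ => -(x - y2) ^ 2 / L ^ 2)
      (-(2 * (x - y2) ^ 1 * 1) / L ^ 2) x :=
    (((hasDerivAt_id x).sub_const y2).pow 2).neg.div_const (L ^ 2)
  have h := ((h1.exp).add (h2.exp)).const_mul C
  refine h.congr_deriv ?_
  have e1 : (x - y2) ^ 2 = (y2 - x) ^ 2 := by ring
  rw [e1]
  ring

theorem monotone_on_halves_of_close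
    (y1 y2 L σ0 σ : ℝ) (hy : y1 < y2) (hL : 0 < L) (hσ0 : 0 < σ0) (hσ : 0 < σ)
    (f : ℝ → ℝ)
    (hf : ∀ x, f x = (σ0 ^ 4 / (σ0 ^ 2 + σ ^ 2)) *
      (Real.exp (-(x - y1) ^ 2 / L ^ 2) + Real.exp (-(x - y2) ^ 2 / L ^ 2)))
    (hdist : y2 - y1 ≤ Real.sqrt 2 * L) :
    MonotoneOn f (Set.Icc y1 ((y1 + y2) / 2)) ∧
    AntitoneOn f (Set.Icc ((y1 + y2) / 2) y2) := by
  set C := σ0 ^ 4 / (σ0 ^ 2 + σ ^ 2) with hC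
  have hC0 : 0 ≤ C := by positivity
  have hfe : f = fun x => C * (Real.exp (-(x - y1) ^ 2 / L ^ 2) +
      Real.exp (-(x - y2) ^ 2 / L ^ 2)) := funext hf
  have hderiv : ∀ x : ℝ, deriv f x = C * (2 / L ^ 2) *
      ((y2 - x) * Real.exp (-(y2 - x) ^ 2 / L ^ 2) -
       (x - y1) * Real.exp (-(x - y1) ^ 2 / L ^ 2)) := by
    intro x
    rw [hfe]
    exact (hasDerivAt_F y1 y2 L C hL x).deriv
  have hdiff : Differentiable ℝ f := by
    intro x
    rw [hfe]
    exact (hasDerivAt_F y1 y2 L C hL x).differentiableAt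
  constructor
  · apply monotoneOn_of_deriv_nonneg (convex_Icc _ _) hdiff.continuous.continuousOn
      hdiff.differentiableOn
    intro x hx
    rw [interior_Icc] at hx
    obtain ⟨hx1, hx2⟩ := hx
    rw [hderiv]
    have hkey : (x - y1) * Real.exp (-(x - y1) ^ 2 / L ^ 2) ≤
        (y2 - x) * Real.exp (-(y2 - x) ^ 2 / L ^ 2) := by
      apply key_ineq L _ _ hL (by linarith) (by linarith)
      calc x - y1 + (y2 - x) = y2 - y1 := by ring
        _ ≤ Real.sqrt 2 * L := hdist
    have : 0 ≤ C * (2 / L ^ 2) := by positivity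
    nlinarith
  · apply antitoneOn_of_deriv_nonpos (convex_Icc _ _) hdiff.continuous.continuousOn
      hdiff.differentiableOn
    intro x hx
    rw [interior_Icc] at hx
    obtain ⟨hx1, hx2⟩ := hx
    rw [hderiv]
    have hkey : (y2 - x) * Real.exp (-(y2 - x) ^ 2 / L ^ 2) ≤
        (x - y1) * Real.exp (-(x - y1) ^ 2 / L ^ 2) := by
      apply key_ineq L _ _ hL (by linarith) (by linarith)
      calc y2 - x + (x - y1) = y2 - y1 := by ring
        _ ≤ Real.sqrt 2 * L := hdist
    have : 0 ≤ C * (2 / L ^ 2) := by positivity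
    nlinarith
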